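/- Let T_n be the chain triangular cactus of order n: the graph consisting of n triangles arranged in a path, where consecutive triangles share exactly one vertex (each cut vertex belongs to exactly two triangles). Then Mo(T_{2k}) = 12k² − 4k and Mo(T_{2k+1}) = 12k² + 8k for all k ≥ 1. -/

import Mathlib

open Finset

section MostarDefs

variable {V : Type*}

/-- Number of vertices of `G` strictly closer to `u` than to `v`. -/
noncomputable def closerCount (G : SimpleGraph V) (u v : V) : ℕ :=
  Nat.card {w : V // G.dist w u < G.dist w v}

/-- Contribution `|n_u - n_v|` of an edge, as a symmetric function on `Sym2 V`. -/
noncomputable def mostarTerm (G : SimpleGraph V) : Sym2 V → ℕ :=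
  Sym2.lift ⟨fun u v => ((closerCount G u v : ℤ) - closerCount G v u).natAbs,
    fun u v => by dsimp only; omega⟩

/-- The Mostar index of a finite graph. -/
noncomputable def mostar (G : SimpleGraph V) [Finite V] : ℕ :=
  letI := Fintype.ofFinite V
  letI := Classical.decEq V
  letI := Classical.decRel G.Adj
  ∑ e ∈ G.edgeFinset, mostarTerm G e

/-- Distance from a vertex `w` to an edge, as min over the endpoints. -/
noncomputable def vertexEdgeDist (G : SimpleGraph V) (w : V) : Sym2 V → ℕ :=
  Sym2.lift ⟨fun x y => min (G.dist x w) (G.dist y w), fun _ _ => min_comm _ _⟩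

/-- Number of edges of `G` strictly closer to `u` than to `v`. -/
noncomputable def edgeCloserCount (G : SimpleGraph V) (u v : V) : ℕ :=
  Nat.card {e : Sym2 V // e ∈ G.edgeSet ∧ vertexEdgeDist G u e < vertexEdgeDist G v e}

/-- Contribution `|m_u - m_v|` of an edge, as a symmetric function on `Sym2 V`. -/
noncomputable def emostarTerm (G : SimpleGraph V) : Sym2 V → ℕ :=
  Sym2.lift ⟨fun u v => ((edgeCloserCount G u v : ℤ) - edgeCloserCount G v u).natAbs,
    fun u v => by dsimp only; omega⟩

/-- The edge Mostar index of a finite graph. -/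
noncomputable def emostar (G : SimpleGraph V) [Finite V] : ℕ :=
  letI := Fintype.ofFinite V
  letI := Classical.decEq V
  letI := Classical.decRel G.Adj
  ∑ e ∈ G.edgeFinset, emostarTerm G e

end MostarDefs

/-- Global index of the `p`-th vertex of the `i`-th cycle in a chain of `n` cycles of
length `c`, where consecutive cycles share one vertex: position `0` of cycle `i` is the
entry cut vertex (identified with position `d` of cycle `i-1`). -/
def chainPos (c d i p : ℕ) : ℕ :=
  if p = 0 then (if i = 0 then 0 else (i - 1) * (c - 1) + d) else i * (c - 1) + p

/-- The chain cactus consisting of `n` cycles of length `c` in a chain, where consecutive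
cycles share exactly one vertex, and the two cut vertices of each internal cycle are at
positions `0` and `d` (hence at distance `min d (c - d)` in the cycle). -/
def cactusChain (n c d : ℕ) : SimpleGraph (Fin (n * (c - 1) + 1)) where
  Adj u v := u ≠ v ∧ ∃ i p q, i < n ∧ p < c ∧ q < c ∧
    ((p + 1) % c = q ∨ (q + 1) % c = p) ∧
    u.val = chainPos c d i p ∧ v.val = chainPos c d i q
  symm := ⟨by
    rintro u v ⟨hne, i, p, q, hi, hp, hq, hpq, hu, hv⟩
    exact ⟨hne.symm, i, q, p, hi, hq, hp, hpq.symm, hv, hu⟩⟩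
  loopless := ⟨fun u h => h.1 rfl⟩

namespace ChainAux

def pX (v : ℕ) : ℕ := if v = 0 then 0 else if v % 2 = 1 then v + 1 else v - 1
def pP (v : ℕ) : ℕ := if v = 0 then 0 else if v % 2 = 1 then 0 else 1
def pD (u v : ℕ) : ℕ := if u = v then 0 else ((pX u - pX v) + (pX v - pX u) + pP u + pP v) / 2
lemma pX_cases (v : ℕ) :
    (v = 0 ∧ pX v = 0 ∧ pP v = 0) ∨
    (v % 2 = 1 ∧ pX v = v + 1 ∧ pP v = 0) ∨
    (v ≠ 0 ∧ v % 2 = 0 ∧ pX v + 1 = v ∧ pP v = 1) := by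
  unfold pX pP; split_ifs <;> omega
lemma pP_eq (v : ℕ) : pP v = pX v % 2 := by
  rcases pX_cases v with ⟨_,h,h'⟩|⟨h0,h,h'⟩|⟨h0,h1,h,h'⟩ <;> omega
lemma pX_pX (v : ℕ) : pX (pX v) = v := by
  rcases pX_cases v with ⟨h0,h,_⟩|⟨h0,h,_⟩|⟨h0,h1,h,_⟩ <;>
    rcases pX_cases (pX v) with ⟨g0,g,_⟩|⟨g0,g,_⟩|⟨g0,g1,g,_⟩ <;> omega
lemma pX_inj {a b : ℕ} (h : pX a = pX b) : a = b := by
  have ha := pX_pX a; have hb := pX_pX b; rw [h] at ha; omega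
lemma pX_le {n v : ℕ} (h : v ≤ 2*n) : pX v ≤ 2*n := by
  rcases pX_cases v with ⟨h0,hx,_⟩|⟨h0,hx,_⟩|⟨h0,h1,hx,_⟩ <;> omega
lemma pD_self (v : ℕ) : pD v v = 0 := by simp [pD]
lemma pD_comm (u v : ℕ) : pD u v = pD v u := by
  unfold pD; split_ifs <;> omega
lemma pD_eq_of_ne {u v : ℕ} (h : u ≠ v) :
    pD u v * 2 = (pX u - pX v) + (pX v - pX u) + pP u + pP v := by
  have h1 := pP_eq u; have h2 := pP_eq v
  have hne : pX u ≠ pX v := fun he => h (pX_inj he)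
  unfold pD; rw [if_neg h]; omega
lemma pD_tri (a b c : ℕ) : pD a c ≤ pD a b + pD b c := by
  rcases eq_or_ne a c with rfl | hac
  · simp [pD_self]
  rcases eq_or_ne a b with rfl | hab
  · simp [pD_self]
  rcases eq_or_ne b c with rfl | hbc
  · simp [pD_self]
  have e1 := pD_eq_of_ne hac; have e2 := pD_eq_of_ne hab; have e3 := pD_eq_of_ne hbc
  rcases Nat.le_total (pX a) (pX b) with h4 | h4 <;>
    rcases Nat.le_total (pX a) (pX c) with h5 | h5 <;>
      rcases Nat.le_total (pX b) (pX c) with h6 | h6 <;> omega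
lemma pD_eq_zero {u v : ℕ} (h : pD u v = 0) : u = v := by
  by_contra hne
  have h3 := pD_eq_of_ne hne
  have hne2 : pX u ≠ pX v := fun he => hne (pX_inj he)
  omega

lemma pD_step {n a b : ℕ} (ha : a ≤ 2*n) (hb : b ≤ 2*n) (hab : a ≠ b) (h2 : 2 ≤ pD a b) :
    ∃ c, c ≤ 2*n ∧ pD a c = 1 ∧ pD c b + 1 = pD a b := by
  have hDab := pD_eq_of_ne hab
  have hpa := pP_eq a; have hpb := pP_eq b
  have hxa := pX_le (n := n) ha
  have hxb := pX_le (n := n) hb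
  have hne : pX a ≠ pX b := fun h => hab (pX_inj h)
  rcases Nat.lt_trichotomy (pX b) (pX a) with hlt | heq | hlt
  · rcases Nat.mod_two_eq_zero_or_one (pX a) with hpar | hpar
    · have hblt : pX b + 2 ≤ pX a := by omega
      have hXc : pX (pX (pX a - 2)) = pX a - 2 := pX_pX _
      have hpc : pP (pX (pX a - 2)) = 0 := by rw [pP_eq, hXc]; omega
      have hpa' : pP a = 0 := by omega
      have hac : a ≠ pX (pX a - 2) := by intro h; rw [← h] at hXc; omega
      have hD1 := pD_eq_of_ne hac
      refine ⟨pX (pX a - 2), pX_le (by omega), by clear hpa hpb hDab; omega, ?_⟩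
      rcases eq_or_ne (pX (pX a - 2)) b with hcb | hcb
      · exfalso; rw [hcb] at hXc; clear hD1; omega
      · have hD2 := pD_eq_of_ne hcb; clear hD1 hpa; omega
    · have hXc : pX (pX (pX a - 1)) = pX a - 1 := pX_pX _
      have hpc : pP (pX (pX a - 1)) = 0 := by rw [pP_eq, hXc]; omega
      have hpa' : pP a = 1 := by omega
      have hac : a ≠ pX (pX a - 1) := by intro h; rw [← h] at hXc; omega
      have hD1 := pD_eq_of_ne hac
      refine ⟨pX (pX a - 1), pX_le (by omega), by clear hpa hpb hDab; omega, ?_⟩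
      rcases eq_or_ne (pX (pX a - 1)) b with hcb | hcb
      · exfalso; rw [hcb] at hXc; clear hD1; omega
      · have hD2 := pD_eq_of_ne hcb; clear hD1 hpa; omega
  · exact absurd (pX_inj heq.symm) hab
  · rcases Nat.mod_two_eq_zero_or_one (pX a) with hpar | hpar
    · have hblt : pX a + 2 ≤ pX b := by omega
      have hXc : pX (pX (pX a + 2)) = pX a + 2 := pX_pX _
      have hpc : pP (pX (pX a + 2)) = 0 := by rw [pP_eq, hXc]; omega
      have hpa' : pP a = 0 := by omega
      have hac : a ≠ pX (pX a + 2) := by intro h; rw [← h] at hXc; omega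
      have hD1 := pD_eq_of_ne hac
      refine ⟨pX (pX a + 2), pX_le (by omega), by clear hpa hpb hDab; omega, ?_⟩
      rcases eq_or_ne (pX (pX a + 2)) b with hcb | hcb
      · exfalso; rw [hcb] at hXc; clear hD1; omega
      · have hD2 := pD_eq_of_ne hcb; clear hD1 hpa; omega
    · have hXc : pX (pX (pX a + 1)) = pX a + 1 := pX_pX _
      have hpc : pP (pX (pX a + 1)) = 0 := by rw [pP_eq, hXc]; omega
      have hpa' : pP a = 1 := by omega
      have hac : a ≠ pX (pX a + 1) := by intro h; rw [← h] at hXc; omega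
      have hD1 := pD_eq_of_ne hac
      refine ⟨pX (pX a + 1), pX_le (by omega), by clear hpa hpb hDab; omega, ?_⟩
      rcases eq_or_ne (pX (pX a + 1)) b with hcb | hcb
      · exfalso; rw [hcb] at hXc; clear hD1; omega
      · have hD2 := pD_eq_of_ne hcb; clear hD1 hpa; omega


lemma chain0 (i : ℕ) : pX (chainPos 3 1 i 0) = 2*i ∧ pP (chainPos 3 1 i 0) = 0 := by
  unfold chainPos
  rcases eq_or_ne i 0 with rfl | hi
  · simp [pX, pP]
  · rw [if_pos rfl, if_neg hi]
    rcases pX_cases ((i-1) * (3-1) + 1) with ⟨h0,hx,hp⟩|⟨h0,hx,hp⟩|⟨h0,h1,hx,hp⟩ <;>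
      constructor <;> omega

lemma chain1 (i : ℕ) : chainPos 3 1 i 1 = 2*i+1 ∧ pX (chainPos 3 1 i 1) = 2*i+2 ∧
    pP (chainPos 3 1 i 1) = 0 := by
  unfold chainPos; norm_num
  rcases pX_cases (i * 2 + 1) with ⟨h0,hx,hp⟩|⟨h0,hx,hp⟩|⟨h0,h1,hx,hp⟩ <;> constructor <;> omega

lemma chain2 (i : ℕ) : chainPos 3 1 i 2 = 2*i+2 ∧ pX (chainPos 3 1 i 2) = 2*i+1 ∧
    pP (chainPos 3 1 i 2) = 1 := by
  unfold chainPos; norm_num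
  rcases pX_cases (i * 2 + 2) with ⟨h0,hx,hp⟩|⟨h0,hx,hp⟩|⟨h0,h1,hx,hp⟩ <;> constructor <;> omega

variable {n : ℕ}

lemma val_le (u : Fin (n * (3-1) + 1)) : u.val ≤ 2 * n := by
  have := u.isLt; omega

lemma adj_pD {u v : Fin (n * (3-1) + 1)} (h : (cactusChain n 3 1).Adj u v) :
    u ≠ v ∧ pD u.val v.val = 1 := by
  obtain ⟨hne, i, p, q, hi, hp, hq, hpq, hu, hv⟩ := h
  refine ⟨hne, ?_⟩
  have hvne : u.val ≠ v.val := fun h => hne (Fin.ext h)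
  have hD := pD_eq_of_ne hvne
  have c0 := chain0 i; have c1 := chain1 i; have c2 := chain2 i
  interval_cases p <;> interval_cases q <;>
    simp only [hu, hv] at hD hvne ⊢ <;> omega

lemma adj_of_pD' {u v : Fin (n * (3-1) + 1)} (hne : u ≠ v) (hD : pD u.val v.val = 1)
    (hlt : pX u.val < pX v.val) : (cactusChain n 3 1).Adj u v := by
  have hvne : u.val ≠ v.val := fun h => hne (Fin.ext h)
  have hDab := pD_eq_of_ne hvne
  rw [hD] at hDab
  have hbu := val_le u; have hbv := val_le v
  refine ⟨hne, ?_⟩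
  rcases pX_cases u.val with ⟨ha0,hax,hap⟩|⟨ha0,hax,hap⟩|⟨ha0,ha1,hax,hap⟩ <;>
    rcases pX_cases v.val with ⟨hb0,hbx,hbp⟩|⟨hb0,hbx,hbp⟩|⟨hb0,hb1,hbx,hbp⟩
  · omega
  · -- a = 0, b odd : b = 1
    refine ⟨0, 0, 1, by omega, by norm_num, by norm_num, by norm_num, ?_, ?_⟩ <;>
      · simp only [chainPos]; norm_num [-Fin.val_eq_zero_iff]; omega
  · -- a = 0, b even : b = 2
    refine ⟨0, 0, 2, by omega, by norm_num, by norm_num, by norm_num, ?_, ?_⟩ <;>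
      · simp only [chainPos]; norm_num [-Fin.val_eq_zero_iff]; omega
  · omega
  · -- a odd, b odd : b = a + 2
    refine ⟨(u.val+1)/2, 0, 1, by omega, by norm_num, by norm_num, by norm_num, ?_, ?_⟩
    · simp only [chainPos]; norm_num [-Fin.val_eq_zero_iff]; split_ifs <;> omega
    · simp only [chainPos]; norm_num; omega
  · -- a odd, b even : b = a + 3
    refine ⟨(u.val+1)/2, 0, 2, by omega, by norm_num, by norm_num, by norm_num, ?_, ?_⟩
    · simp only [chainPos]; norm_num [-Fin.val_eq_zero_iff]; split_ifs <;> omega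
    · simp only [chainPos]; norm_num; omega
  · omega
  · -- a even, b odd : b = a - 1
    refine ⟨(u.val-2)/2, 2, 1, by omega, by norm_num, by norm_num, by norm_num, ?_, ?_⟩ <;>
      · simp only [chainPos]; norm_num; omega
  · omega

lemma adj_of_pD {u v : Fin (n * (3-1) + 1)} (hne : u ≠ v) (hD : pD u.val v.val = 1) :
    (cactusChain n 3 1).Adj u v := by
  rcases Nat.lt_trichotomy (pX u.val) (pX v.val) with h | h | h
  · exact adj_of_pD' hne hD h
  · exact absurd (Fin.ext (pX_inj h)) hne
  · exact ((cactusChain n 3 1).adj_symm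
      (adj_of_pD' hne.symm (by rwa [pD_comm]) h))

lemma exists_walk (m : ℕ) : ∀ u v : Fin (n * (3-1) + 1), pD u.val v.val ≤ m →
    ∃ w : (cactusChain n 3 1).Walk u v, w.length = pD u.val v.val := by
  induction m with
  | zero =>
    intro u v h
    have : u = v := Fin.ext (pD_eq_zero (Nat.le_zero.mp h))
    subst this
    exact ⟨SimpleGraph.Walk.nil, by simp [pD_self]⟩
  | succ m ih =>
    intro u v h
    rcases eq_or_ne u v with rfl | hne
    · exact ⟨SimpleGraph.Walk.nil, by simp [pD_self]⟩
    have hvne : u.val ≠ v.val := fun h => hne (Fin.ext h)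
    rcases eq_or_lt_of_le (Nat.one_le_iff_ne_zero.mpr
        (fun h0 => hvne (pD_eq_zero h0))) with h1 | h2
    · exact ⟨SimpleGraph.Walk.cons (adj_of_pD hne h1.symm) SimpleGraph.Walk.nil,
        by simp [← h1]⟩
    · obtain ⟨c, hc, hD1, hD2⟩ := pD_step (val_le u) (val_le v) hvne h2
      have hcc : c < n * (3-1) + 1 := by omega
      have huw : u ≠ (⟨c, hcc⟩ : Fin _) := by
        intro he
        have h0 : pD u.val c = 1 := hD1
        rw [he] at h0
        simp [pD_self] at h0
      obtain ⟨p, hp⟩ := ih ⟨c, hcc⟩ v (by show pD c v.val ≤ m; omega)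
      refine ⟨SimpleGraph.Walk.cons (adj_of_pD huw hD1) p, ?_⟩
      simp only [SimpleGraph.Walk.length_cons, hp]
      show pD c v.val + 1 = _
      omega

lemma pD_le_length : ∀ (u v : Fin (n * (3-1) + 1)) (w : (cactusChain n 3 1).Walk u v),
    pD u.val v.val ≤ w.length := by
  intro u v w
  induction w with
  | nil => simp [pD_self]
  | cons h p ih =>
    rename_i a b c
    have h1 := (adj_pD h).2
    have := pD_tri a.val b.val c.val
    simp only [SimpleGraph.Walk.length_cons]
    omega

lemma dist_eq (u v : Fin (n * (3-1) + 1)) :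
    (cactusChain n 3 1).dist u v = pD u.val v.val := by
  obtain ⟨w, hw⟩ := exists_walk (pD u.val v.val) u v le_rfl
  refine le_antisymm (hw ▸ SimpleGraph.dist_le w) ?_
  obtain ⟨p, hp⟩ := SimpleGraph.Reachable.exists_walk_length_eq_dist ⟨w⟩
  calc pD u.val v.val ≤ p.length := pD_le_length u v p
  _ = _ := hp

open Finset

lemma card_val_le (t : ℕ) (ht : t ≤ 2*n) :
    (univ.filter (fun w : Fin (n * (3-1) + 1) => w.val ≤ t)).card = t + 1 := by
  have h : ∀ m ∈ Finset.range (t+1), m < n * (3-1) + 1 := by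
    intro m hm; simp only [Finset.mem_range] at hm; omega
  have : (univ.filter (fun w : Fin (n * (3-1) + 1) => w.val ≤ t)) =
      (Finset.range (t+1)).attachFin h := by
    ext w
    simp [Finset.mem_attachFin, Nat.lt_succ_iff]
  rw [this, Finset.card_attachFin, Finset.card_range]

lemma card_pX_le (t : ℕ) (ht : t ≤ 2*n) :
    (univ.filter (fun w : Fin (n * (3-1) + 1) => pX w.val ≤ t)).card = t + 1 := by
  classical
  set e : Fin (n * (3-1) + 1) → Fin (n * (3-1) + 1) :=
    fun w => ⟨pX w.val, by have := pX_le (n := n) (val_le w); omega⟩ with he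
  have hinv : ∀ w, e (e w) = w := by
    intro w; apply Fin.ext; simp [he, pX_pX]
  have hinj : Function.Injective e := Function.LeftInverse.injective hinv
  have himg : (univ.filter (fun w : Fin (n * (3-1) + 1) => pX w.val ≤ t)) =
      (univ.filter (fun w : Fin (n * (3-1) + 1) => w.val ≤ t)).image e := by
    ext w
    simp only [Finset.mem_filter, Finset.mem_univ, true_and, Finset.mem_image]
    constructor
    · intro hw
      exact ⟨e w, by simpa [he] using hw, hinv w⟩
    · rintro ⟨x, hx, rfl⟩
      simpa [he, pX_pX] using hx
  rw [himg, Finset.card_image_of_injective _ hinj, card_val_le t ht]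

lemma card_pX_ge (t : ℕ) (ht : 1 ≤ t) (ht2 : t ≤ 2*n + 1) :
    (univ.filter (fun w : Fin (n * (3-1) + 1) => t ≤ pX w.val)).card = 2*n + 1 - t := by
  classical
  have h1 := Finset.card_filter_add_card_filter_not
    (s := (univ : Finset (Fin (n * (3-1) + 1)))) (p := fun w => pX w.val ≤ t - 1)
  have h2 : (univ.filter (fun w : Fin (n * (3-1) + 1) => ¬ (pX w.val ≤ t - 1))) =
      (univ.filter (fun w : Fin (n * (3-1) + 1) => t ≤ pX w.val)) := by
    ext w; simp only [Finset.mem_filter, Finset.mem_univ, true_and]; omega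
  rcases Nat.lt_or_ge (t-1) (2*n+1) with h | h
  · have h3 := card_pX_le (n := n) (t-1) (by omega)
    rw [h2] at h1
    have h4 : (univ : Finset (Fin (n * (3-1) + 1))).card = n * (3-1) + 1 := by
      simp
    omega
  · omega

lemma closerCount_eq (u v : Fin (n * (3-1) + 1)) :
    closerCount (cactusChain n 3 1) u v =
    (univ.filter (fun w : Fin (n * (3-1) + 1) => pD w.val u.val < pD w.val v.val)).card := by
  classical
  unfold closerCount
  simp only [dist_eq]
  rw [Nat.card_eq_fintype_card, Fintype.card_subtype]

lemma cc_left {u v : Fin (n * (3-1) + 1)} (hne : u ≠ v) (hpu : pP u.val = 0)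
    (hD : pD u.val v.val = 1) (hlt : pX u.val < pX v.val) :
    closerCount (cactusChain n 3 1) u v = pX u.val + 1 := by
  rw [closerCount_eq]
  have hvne : u.val ≠ v.val := fun h => hne (Fin.ext h)
  have hDe := pD_eq_of_ne hvne
  rw [hD] at hDe
  have hpue := pP_eq u.val
  have hpve := pP_eq v.val
  have hset : (univ.filter (fun w : Fin (n * (3-1) + 1) =>
      pD w.val u.val < pD w.val v.val)) =
      (univ.filter (fun w : Fin (n * (3-1) + 1) => pX w.val ≤ pX u.val)) := by
    ext w
    simp only [Finset.mem_filter, Finset.mem_univ, true_and]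
    rcases eq_or_ne w u with rfl | hwu
    · simp [pD_self, hD]
    rcases eq_or_ne w v with rfl | hwv
    · have h1 := pD_eq_of_ne (Ne.symm hvne)
      simp only [pD_self]
      omega
    have e1 := pD_eq_of_ne (fun h => hwu (Fin.ext h) : w.val ≠ u.val)
    have e2 := pD_eq_of_ne (fun h => hwv (Fin.ext h) : w.val ≠ v.val)
    have hpw := pP_eq w.val
    constructor <;> intro <;> omega
  rw [hset, card_pX_le _ (pX_le (val_le u))]

lemma cc_right {u v : Fin (n * (3-1) + 1)} (hne : u ≠ v) (hpu : pP u.val = 0)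
    (hD : pD u.val v.val = 1) (hlt : pX v.val < pX u.val) :
    closerCount (cactusChain n 3 1) u v = 2*n + 1 - pX u.val := by
  rw [closerCount_eq]
  have hvne : u.val ≠ v.val := fun h => hne (Fin.ext h)
  have hDe := pD_eq_of_ne hvne
  rw [hD] at hDe
  have hpue := pP_eq u.val
  have hpve := pP_eq v.val
  have hxu := pX_le (n := n) (val_le u)
  have hset : (univ.filter (fun w : Fin (n * (3-1) + 1) =>
      pD w.val u.val < pD w.val v.val)) =
      (univ.filter (fun w : Fin (n * (3-1) + 1) => pX u.val ≤ pX w.val)) := by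
    ext w
    simp only [Finset.mem_filter, Finset.mem_univ, true_and]
    rcases eq_or_ne w u with rfl | hwu
    · simp [pD_self, hD]
    rcases eq_or_ne w v with rfl | hwv
    · have h1 := pD_eq_of_ne (Ne.symm hvne)
      simp only [pD_self]
      omega
    have e1 := pD_eq_of_ne (fun h => hwu (Fin.ext h) : w.val ≠ u.val)
    have e2 := pD_eq_of_ne (fun h => hwv (Fin.ext h) : w.val ≠ v.val)
    have hpw := pP_eq w.val
    constructor <;> intro <;> omega
  rw [hset, card_pX_ge _ (by omega) (by omega)]

lemma cc_pendant {u v : Fin (n * (3-1) + 1)} (hne : u ≠ v) (hpu : pP u.val = 1)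
    (hD : pD u.val v.val = 1) :
    closerCount (cactusChain n 3 1) u v = 1 := by
  rw [closerCount_eq]
  have hvne : u.val ≠ v.val := fun h => hne (Fin.ext h)
  have hDe := pD_eq_of_ne hvne
  rw [hD] at hDe
  have hpue := pP_eq u.val
  have hpve := pP_eq v.val
  have hset : (univ.filter (fun w : Fin (n * (3-1) + 1) =>
      pD w.val u.val < pD w.val v.val)) = {u} := by
    ext w
    simp only [Finset.mem_filter, Finset.mem_univ, true_and, Finset.mem_singleton]
    rcases eq_or_ne w u with rfl | hwu
    · simp [pD_self, hD]
    rcases eq_or_ne w v with rfl | hwv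
    · have h1 := pD_eq_of_ne (Ne.symm hvne)
      simp only [pD_self]
      constructor
      · intro; omega
      · intro h; exact absurd h hwu
    have e1 := pD_eq_of_ne (fun h => hwu (Fin.ext h) : w.val ≠ u.val)
    have e2 := pD_eq_of_ne (fun h => hwv (Fin.ext h) : w.val ≠ v.val)
    have hpw := pP_eq w.val
    constructor
    · intro h
      exfalso
      rcases Nat.le_total (pX w.val) (pX u.val) with h4 | h4 <;>
        rcases Nat.le_total (pX w.val) (pX v.val) with h5 | h5 <;>
          rcases Nat.le_total (pX u.val) (pX v.val) with h6 | h6 <;> omega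
    · intro h; exact absurd h hwu
  rw [hset, Finset.card_singleton]

def vmk (n a : ℕ) : Fin (n * (3-1) + 1) :=
  if h : a < n * (3-1) + 1 then ⟨a, h⟩ else ⟨0, by omega⟩

lemma vmk_val {a : ℕ} (h : a ≤ 2*n) : (vmk n a).val = a := by
  unfold vmk; rw [dif_pos (by omega)]

lemma chainPos0_le (i : ℕ) : chainPos 3 1 i 0 ≤ 2*i := by
  unfold chainPos; split_ifs <;> omega

def eA (n i : ℕ) : Sym2 (Fin (n * (3-1) + 1)) := s(vmk n (chainPos 3 1 i 0), vmk n (2*i+1))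
def eB (n i : ℕ) : Sym2 (Fin (n * (3-1) + 1)) := s(vmk n (chainPos 3 1 i 0), vmk n (2*i+2))
def eC (n i : ℕ) : Sym2 (Fin (n * (3-1) + 1)) := s(vmk n (2*i+1), vmk n (2*i+2))

lemma vals_of (i : ℕ) (hi : i < n) :
    (vmk n (chainPos 3 1 i 0)).val = chainPos 3 1 i 0 ∧
    (vmk n (2*i+1)).val = 2*i+1 ∧ (vmk n (2*i+2)).val = 2*i+2 := by
  have h0 := chainPos0_le i
  exact ⟨vmk_val (by omega), vmk_val (by omega), vmk_val (by omega)⟩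

lemma term_eA (i : ℕ) (hi : i < n) :
    mostarTerm (cactusChain n 3 1) (eA n i) =
      ((2*i+1 : ℤ) - (2*n-2*i-1 : ℤ)).natAbs := by
  obtain ⟨hA, hB, -⟩ := vals_of i hi
  have c0 := chain0 i
  have c1 := chain1 i
  set A := vmk n (chainPos 3 1 i 0)
  set B := vmk n (2*i+1)
  have hxA : pX A.val = 2*i := by rw [hA]; exact c0.1
  have hpA : pP A.val = 0 := by rw [hA]; exact c0.2
  have hxB : pX B.val = 2*i+2 := by rw [hB, ← c1.1]; exact c1.2.1
  have hpB : pP B.val = 0 := by rw [hB, ← c1.1]; exact c1.2.2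
  have hne : A ≠ B := by
    intro h
    rw [h] at hxA
    omega
  have hvne : A.val ≠ B.val := fun h => hne (Fin.ext h)
  have hD : pD A.val B.val = 1 := by
    have := pD_eq_of_ne hvne; omega
  have h1 : closerCount (cactusChain n 3 1) A B = 2*i+1 := by
    rw [cc_left hne hpA hD (by omega), hxA]
  have h2 : closerCount (cactusChain n 3 1) B A = 2*n-2*i-1 := by
    rw [cc_right hne.symm hpB (by rwa [pD_comm]) (by omega), hxB]
    omega
  unfold eA
  rw [show s(A, B) = s(A, B) from rfl]
  simp only [mostarTerm, Sym2.lift_mk]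
  rw [h1, h2]
  congr 1
  push_cast [Nat.cast_sub]
  omega

lemma term_eB (i : ℕ) (hi : i < n) :
    mostarTerm (cactusChain n 3 1) (eB n i) = 2*i := by
  obtain ⟨hA, -, hC⟩ := vals_of i hi
  have c0 := chain0 i
  have c2 := chain2 i
  set A := vmk n (chainPos 3 1 i 0)
  set C := vmk n (2*i+2)
  have hxA : pX A.val = 2*i := by rw [hA]; exact c0.1
  have hpA : pP A.val = 0 := by rw [hA]; exact c0.2
  have hxC : pX C.val = 2*i+1 := by rw [hC, ← c2.1]; exact c2.2.1
  have hpC : pP C.val = 1 := by rw [hC, ← c2.1]; exact c2.2.2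
  have hne : A ≠ C := by
    intro h; rw [h] at hxA; omega
  have hvne : A.val ≠ C.val := fun h => hne (Fin.ext h)
  have hD : pD A.val C.val = 1 := by
    have := pD_eq_of_ne hvne; omega
  have h1 : closerCount (cactusChain n 3 1) A C = 2*i+1 := by
    rw [cc_left hne hpA hD (by omega), hxA]
  have h2 : closerCount (cactusChain n 3 1) C A = 1 :=
    cc_pendant hne.symm hpC (by rwa [pD_comm])
  unfold eB
  simp only [mostarTerm, Sym2.lift_mk]
  rw [h1, h2]
  omega

lemma term_eC (i : ℕ) (hi : i < n) :
    mostarTerm (cactusChain n 3 1) (eC n i) = 2*n-2*i-2 := by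
  obtain ⟨-, hB, hC⟩ := vals_of i hi
  have c1 := chain1 i
  have c2 := chain2 i
  set B := vmk n (2*i+1)
  set C := vmk n (2*i+2)
  have hxB : pX B.val = 2*i+2 := by rw [hB, ← c1.1]; exact c1.2.1
  have hpB : pP B.val = 0 := by rw [hB, ← c1.1]; exact c1.2.2
  have hxC : pX C.val = 2*i+1 := by rw [hC, ← c2.1]; exact c2.2.1
  have hpC : pP C.val = 1 := by rw [hC, ← c2.1]; exact c2.2.2
  have hne : B ≠ C := by
    intro h; rw [h] at hxB; omega
  have hvne : B.val ≠ C.val := fun h => hne (Fin.ext h)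
  have hD : pD B.val C.val = 1 := by
    have := pD_eq_of_ne hvne; omega
  have h1 : closerCount (cactusChain n 3 1) B C = 2*n-2*i-1 := by
    rw [cc_right hne hpB hD (by omega), hxB]
    omega
  have h2 : closerCount (cactusChain n 3 1) C B = 1 :=
    cc_pendant hne.symm hpC (by rwa [pD_comm])
  unfold eC
  simp only [mostarTerm, Sym2.lift_mk]
  rw [h1, h2]
  have : (2*n-2*i-1 : ℕ) = (2*n-2*i-2) + 1 := by omega
  omega

def Efin (n : ℕ) : Finset (Sym2 (Fin (n * (3-1) + 1))) :=
  (Finset.range n).biUnion (fun i => {eA n i, eB n i, eC n i})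

lemma edges_pX (i : ℕ) (hi : i < n) :
    pX (vmk n (chainPos 3 1 i 0)).val = 2*i ∧ pX (vmk n (2*i+1)).val = 2*i+2 ∧
    pX (vmk n (2*i+2)).val = 2*i+1 := by
  obtain ⟨hA, hB, hC⟩ := vals_of i hi
  refine ⟨?_, ?_, ?_⟩
  · rw [hA]; exact (chain0 i).1
  · rw [hB, ← (chain1 i).1]; exact (chain1 i).2.1
  · rw [hC, ← (chain2 i).1]; exact (chain2 i).2.1

noncomputable def ekey1 {n : ℕ} : Sym2 (Fin (n * (3-1) + 1)) → ℕ :=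
  Sym2.lift ⟨fun x y => min (pX x.val) (pX y.val), fun x y => by dsimp only; rw [min_comm]⟩

noncomputable def ekey2 {n : ℕ} : Sym2 (Fin (n * (3-1) + 1)) → ℕ :=
  Sym2.lift ⟨fun x y => max (pX x.val) (pX y.val), fun x y => by dsimp only; rw [max_comm]⟩

lemma ekey_eA (i : ℕ) (hi : i < n) : ekey1 (eA n i) = 2*i ∧ ekey2 (eA n i) = 2*i+2 := by
  obtain ⟨h1, h2, h3⟩ := edges_pX i hi
  simp only [ekey1, ekey2, eA, Sym2.lift_mk]
  rw [h1, h2]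
  omega

lemma ekey_eB (i : ℕ) (hi : i < n) : ekey1 (eB n i) = 2*i ∧ ekey2 (eB n i) = 2*i+1 := by
  obtain ⟨h1, h2, h3⟩ := edges_pX i hi
  simp only [ekey1, ekey2, eB, Sym2.lift_mk]
  rw [h1, h3]
  omega

lemma ekey_eC (i : ℕ) (hi : i < n) : ekey1 (eC n i) = 2*i+1 ∧ ekey2 (eC n i) = 2*i+2 := by
  obtain ⟨h1, h2, h3⟩ := edges_pX i hi
  simp only [ekey1, ekey2, eC, Sym2.lift_mk]
  rw [h2, h3]
  omega

lemma mem_Efin_adj (e : Sym2 (Fin (n * (3-1) + 1))) :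
    e ∈ Efin n ↔ e ∈ (cactusChain n 3 1).edgeSet := by
  constructor
  · intro he
    simp only [Efin, Finset.mem_biUnion, Finset.mem_range, Finset.mem_insert,
      Finset.mem_singleton] at he
    obtain ⟨i, hi, he⟩ := he
    obtain ⟨hA, hB, hC⟩ := vals_of i hi
    obtain ⟨xA, xB, xC⟩ := edges_pX i hi
    have pA : pP (vmk n (chainPos 3 1 i 0)).val = 0 := by rw [hA]; exact (chain0 i).2
    have pB : pP (vmk n (2*i+1)).val = 0 := by rw [hB, ← (chain1 i).1]; exact (chain1 i).2.2
    have pC : pP (vmk n (2*i+2)).val = 1 := by rw [hC, ← (chain2 i).1]; exact (chain2 i).2.2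
    rcases he with rfl | rfl | rfl
    · rw [eA, SimpleGraph.mem_edgeSet]
      have hne : vmk n (chainPos 3 1 i 0) ≠ vmk n (2*i+1) := by
        intro h; rw [h] at xA; omega
      refine adj_of_pD hne ?_
      have := pD_eq_of_ne (fun h => hne (Fin.ext h))
      omega
    · rw [eB, SimpleGraph.mem_edgeSet]
      have hne : vmk n (chainPos 3 1 i 0) ≠ vmk n (2*i+2) := by
        intro h; rw [h] at xA; omega
      refine adj_of_pD hne ?_
      have := pD_eq_of_ne (fun h => hne (Fin.ext h))
      omega
    · rw [eC, SimpleGraph.mem_edgeSet]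
      have hne : vmk n (2*i+1) ≠ vmk n (2*i+2) := by
        intro h; rw [h] at xB; omega
      refine adj_of_pD hne ?_
      have := pD_eq_of_ne (fun h => hne (Fin.ext h))
      omega
  · intro he
    induction e with
    | _ u v =>
    rw [SimpleGraph.mem_edgeSet] at he
    obtain ⟨hne, i, p, q, hi, hp, hq, hpq, hu, hv⟩ := he
    simp only [Efin, Finset.mem_biUnion, Finset.mem_range, Finset.mem_insert,
      Finset.mem_singleton]
    refine ⟨i, hi, ?_⟩
    obtain ⟨hA, hB, hC⟩ := vals_of i hi
    have c1 := (chain1 i).1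
    have c2 := (chain2 i).1
    interval_cases p <;> interval_cases q <;> first
      | (exfalso; omega)
      | (left; rw [eA, Sym2.eq_iff]; first
          | (left; exact ⟨Fin.ext (by omega), Fin.ext (by omega)⟩)
          | (right; exact ⟨Fin.ext (by omega), Fin.ext (by omega)⟩))
      | (right; left; rw [eB, Sym2.eq_iff]; first
          | (left; exact ⟨Fin.ext (by omega), Fin.ext (by omega)⟩)
          | (right; exact ⟨Fin.ext (by omega), Fin.ext (by omega)⟩))
      | (right; right; rw [eC, Sym2.eq_iff]; first
          | (left; exact ⟨Fin.ext (by omega), Fin.ext (by omega)⟩)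
          | (right; exact ⟨Fin.ext (by omega), Fin.ext (by omega)⟩))

lemma sum_Efin :
    ∑ e ∈ Efin n, mostarTerm (cactusChain n 3 1) e =
    ∑ i ∈ Finset.range n, (((4*i+2 : ℤ) - 2*n).natAbs + (2*i + (2*n-2*i-2))) := by
  rw [Efin, Finset.sum_biUnion]
  · refine Finset.sum_congr rfl fun i hi => ?_
    have hi' := Finset.mem_range.mp hi
    have kA := ekey_eA i hi'
    have kB := ekey_eB i hi'
    have kC := ekey_eC i hi'
    have hAB : eA n i ≠ eB n i := by
      intro h; have hk := congrArg ekey2 h; rw [kA.2, kB.2] at hk; omega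
    have hAC : eA n i ≠ eC n i := by
      intro h; have hk := congrArg ekey1 h; rw [kA.1, kC.1] at hk; omega
    have hBC : eB n i ≠ eC n i := by
      intro h; have hk := congrArg ekey1 h; rw [kB.1, kC.1] at hk; omega
    rw [Finset.sum_insert (by simp [hAB, hAC]), Finset.sum_insert (by simp [hBC]),
      Finset.sum_singleton, term_eA i hi', term_eB i hi', term_eC i hi']
    have he : ((2*i+1 : ℤ) - (2*n-2*i-1 : ℤ)) = ((4*i+2 : ℤ) - 2*n) := by ring
    rw [he]
  · intro i hi j hj hij
    simp only [Function.onFun]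
    rw [Finset.disjoint_left]
    intro e hei hej
    simp only [Finset.mem_insert, Finset.mem_singleton] at hei hej
    have hi' := Finset.mem_range.mp (Finset.mem_coe.mp hi)
    have hj' := Finset.mem_range.mp (Finset.mem_coe.mp hj)
    have kAi := ekey_eA i hi'; have kBi := ekey_eB i hi'; have kCi := ekey_eC i hi'
    have kAj := ekey_eA j hj'; have kBj := ekey_eB j hj'; have kCj := ekey_eC j hj'
    have h1 : (ekey1 e = 2*i ∧ ekey2 e = 2*i+2) ∨ (ekey1 e = 2*i ∧ ekey2 e = 2*i+1) ∨
        (ekey1 e = 2*i+1 ∧ ekey2 e = 2*i+2) := by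
      rcases hei with rfl | rfl | rfl
      · exact Or.inl kAi
      · exact Or.inr (Or.inl kBi)
      · exact Or.inr (Or.inr kCi)
    have h2 : (ekey1 e = 2*j ∧ ekey2 e = 2*j+2) ∨ (ekey1 e = 2*j ∧ ekey2 e = 2*j+1) ∨
        (ekey1 e = 2*j+1 ∧ ekey2 e = 2*j+2) := by
      rcases hej with rfl | rfl | rfl
      · exact Or.inl kAj
      · exact Or.inr (Or.inl kBj)
      · exact Or.inr (Or.inr kCj)
    exact hij (by omega)

lemma mostar_eq :
    mostar (cactusChain n 3 1) = ∑ e ∈ Efin n, mostarTerm (cactusChain n 3 1) e := by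
  unfold mostar
  refine Finset.sum_congr ?_ fun _ _ => rfl
  ext e
  simp only [SimpleGraph.mem_edgeFinset]
  exact (mem_Efin_adj e).symm

def Fa (m : ℕ) : ℕ := ∑ i ∈ Finset.range m, ((4*i+2 : ℤ) - 2*m).natAbs

lemma Fa_step (m : ℕ) : Fa (m+2) = Fa m + (4*m+4) := by
  unfold Fa
  rw [Finset.sum_range_succ']
  have hsh : ∀ i : ℕ, ((4*(i+1)+2 : ℤ) - 2*(m+2)).natAbs = ((4*i+2 : ℤ) - 2*m).natAbs := by
    intro i; congr 1; push_cast; ring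
  have h0 : ((4*(0:ℕ)+2 : ℤ) - 2*(m+2)).natAbs = 2*m+2 := by push_cast; omega
  calc (∑ i ∈ Finset.range (m+1), ((4*(i+1)+2 : ℤ) - 2*(m+2)).natAbs) +
        ((4*(0:ℕ)+2 : ℤ) - 2*(m+2)).natAbs
      = (∑ i ∈ Finset.range (m+1), ((4*i+2 : ℤ) - 2*m).natAbs) + (2*m+2) := by
        rw [Finset.sum_congr rfl fun i _ => hsh i, h0]
    _ = (∑ i ∈ Finset.range m, ((4*i+2 : ℤ) - 2*m).natAbs) + ((4*m+2 : ℤ) - 2*m).natAbs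
          + (2*m+2) := by rw [Finset.sum_range_succ]
    _ = _ := by
        have : ((4*m+2 : ℤ) - 2*m).natAbs = 2*m+2 := by omega
        rw [this]; omega

lemma Fa_even : ∀ k, Fa (2*k) = 4*k^2 := by
  intro k
  induction k with
  | zero => simp [Fa]
  | succ k ih =>
    have h : 2*(k+1) = 2*k+2 := by ring
    rw [h, Fa_step, ih]
    ring

lemma Fa_odd : ∀ k, Fa (2*k+1) = 4*k^2+4*k := by
  intro k
  induction k with
  | zero => simp [Fa]
  | succ k ih =>
    have h : 2*(k+1)+1 = (2*k+1)+2 := by ring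
    rw [h, Fa_step, ih]
    ring

lemma sum_lin (m : ℕ) : ∑ i ∈ Finset.range m, (2*i + (2*m-2*i-2)) = 2*(m*(m-1)) := by
  rw [Finset.sum_add_distrib]
  have h1 : ∑ i ∈ Finset.range m, 2*i = m*(m-1) := by
    have := Finset.sum_range_id_mul_two m
    have h2 : ∑ i ∈ Finset.range m, 2*i = (∑ i ∈ Finset.range m, i) * 2 := by
      rw [Finset.sum_mul]
      exact Finset.sum_congr rfl fun i _ => by ring
    omega
  have h2 : ∑ i ∈ Finset.range m, (2*m-2*i-2) = m*(m-1) := by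
    have hr := Finset.sum_range_reflect (fun i => 2*i) m
    have : ∑ i ∈ Finset.range m, (2*m-2*i-2) = ∑ i ∈ Finset.range m, 2*(m-1-i) := by
      refine Finset.sum_congr rfl fun i hi => ?_
      have := Finset.mem_range.mp hi
      omega
    rw [this, hr] at *
    omega
  omega

lemma mostar_formula : mostar (cactusChain n 3 1) = Fa n + 2*(n*(n-1)) := by
  rw [mostar_eq, sum_Efin, Finset.sum_add_distrib]
  rw [sum_lin]
  rfl

end ChainAux

open ChainAux in
theorem mostar_chainTriangular (k : ℕ) (hk : 1 ≤ k) :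
    mostar (cactusChain (2 * k) 3 1) = 12 * k ^ 2 - 4 * k ∧
    mostar (cactusChain (2 * k + 1) 3 1) = 12 * k ^ 2 + 8 * k := by
  constructor
  · rw [mostar_formula, Fa_even]
    have h1 : (1:ℕ) ≤ 2*k := by omega
    have h2 : 4*k ≤ 12*k^2 := by nlinarith
    zify [h1, h2]
    ring
  · rw [mostar_formula, Fa_odd]
    have h1 : (1:ℕ) ≤ 2*k+1 := by omega
    zify [h1]
    ring
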